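/- (Integrated pointwise estimate (2.7).) Let l > 0 be noninteger and k = ⌈l⌉. There is a constant C = C(N, l, p, k) > 0 such that for every bounded continuous function u : ℝ^N × ℝ → ℝ with ⟨u⟩^{(l)} < ∞, every x ∈ ℝ^N, every t ≥ 0 and every ε > 0, one has ε^{N+2} |u(x,t)|^p ≤ C (⟨u⟩^{(l)})^p ε^{N+2+pl} + C Σ_{i=1}^{k} ∫_{Q_{iε}(x,t)} |u(z,θ)|^p dz dθ, where Q_r(x,t) := { (z,θ) ∈ ℝ^N × ℝ : |z - x| ≤ r, t ≤ θ ≤ t + r ε } with r = iε (i.e. Q_{iε}(x,t) = { |z-x| ≤ iε, t ≤ θ ≤ t + iε² }). -/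

import Mathlib

open MeasureTheory Finset ENNReal

/-- Parabolic norm of an increment `H = (h, τ)`: `‖h‖ + |τ|^(1/2)`. -/
noncomputable def pnormH {N : ℕ} (h : EuclideanSpace ℝ (Fin N)) (τ : ℝ) : ℝ :=
  ‖h‖ + |τ| ^ ((1 : ℝ) / 2)

/-- `k`-th finite difference of `u` along `H = (h, τ)` at `(x, t)`. -/
noncomputable def fdiffP {N : ℕ} (u : EuclideanSpace ℝ (Fin N) × ℝ → ℝ) (k : ℕ)
    (h : EuclideanSpace ℝ (Fin N)) (τ : ℝ) (x : EuclideanSpace ℝ (Fin N)) (t : ℝ) : ℝ :=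
  ∑ i ∈ Finset.range (k + 1),
    (-1 : ℝ) ^ (k - i) * (k.choose i : ℝ) * u (x + (i : ℝ) • h, t + (i : ℝ) * τ)

/-- Parabolic Hölder seminorm `⟨u⟩^{(l)}` on `ℝ^N × [0, ∞)`, with `k`-th differences. -/
noncomputable def semiP {N : ℕ} (u : EuclideanSpace ℝ (Fin N) × ℝ → ℝ) (l : ℝ) (k : ℕ) :
    ℝ≥0∞ :=
  ⨆ (x : EuclideanSpace ℝ (Fin N)) (t : ℝ) (_ : 0 ≤ t)
    (h : EuclideanSpace ℝ (Fin N)) (τ : ℝ) (_ : 0 ≤ τ) (_ : ¬(h = 0 ∧ τ = 0)),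
    ENNReal.ofReal (|fdiffP u k h τ x t| / pnormH h τ ^ l)

/-- `L^p` norm of `u` on `ℝ^N × (0, ∞)`. -/
noncomputable def lpP {N : ℕ} (u : EuclideanSpace ℝ (Fin N) × ℝ → ℝ) (p : ℝ) : ℝ≥0∞ :=
  (∫⁻ z in {z : EuclideanSpace ℝ (Fin N) × ℝ | 0 < z.2},
    ENNReal.ofReal (|u z| ^ p)) ^ (1 / p)

/-- `M_p(u) = sup_{t ≥ 0} ‖u(·, t)‖_{L^p(ℝ^N)}`. -/
noncomputable def mpP {N : ℕ} (u : EuclideanSpace ℝ (Fin N) × ℝ → ℝ) (p : ℝ) : ℝ≥0∞ :=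
  ⨆ (t : ℝ) (_ : 0 ≤ t),
    (∫⁻ x : EuclideanSpace ℝ (Fin N), ENNReal.ofReal (|u (x, t)| ^ p)) ^ (1 / p)

/-- Parabolic Hölder norm `|u|^{(l)} = sup |u| + ⟨u⟩^{(l)}` with `k = ⌊l⌋ + 1`. -/
noncomputable def normP {N : ℕ} (u : EuclideanSpace ℝ (Fin N) × ℝ → ℝ) (l : ℝ) : ℝ≥0∞ :=
  (⨆ (x : EuclideanSpace ℝ (Fin N)) (t : ℝ) (_ : 0 ≤ t), ENNReal.ofReal |u (x, t)|) +
    semiP u l (⌊l⌋₊ + 1)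

lemma enn_rpow_self_of {p : ℝ} (hp : 0 < p) (a : ℝ≥0∞) : (a ^ p) ^ (1/p) = a := by
  rw [← ENNReal.rpow_mul, mul_one_div, div_self hp.ne', ENNReal.rpow_one]

lemma enn_rpow_self_of' {p : ℝ} (hp : 0 < p) (a : ℝ≥0∞) : (a ^ (1/p)) ^ p = a := by
  rw [← ENNReal.rpow_mul, one_div_mul_cancel hp.ne', ENNReal.rpow_one]

lemma enn_sum_rpow_le {ι : Type*} (s : Finset ι) (c : ι → ℝ≥0∞) {p : ℝ} (hp : 0 < p) :
    (∑ j ∈ s, c j) ^ p ≤ (s.card : ℝ≥0∞) ^ p * ∑ j ∈ s, (c j) ^ p := by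
  set T := ∑ j ∈ s, (c j) ^ p with hT
  have h1 : ∀ j ∈ s, c j ≤ T ^ (1/p) := by
    intro j hj
    calc c j = ((c j) ^ p) ^ (1/p) := (enn_rpow_self_of hp _).symm
      _ ≤ T ^ (1/p) :=
        ENNReal.rpow_le_rpow (Finset.single_le_sum (f := fun j => (c j) ^ p)
          (fun _ _ => zero_le) hj) (by positivity)
  calc (∑ j ∈ s, c j) ^ p ≤ (∑ _j ∈ s, T ^ (1/p)) ^ p :=
        ENNReal.rpow_le_rpow (Finset.sum_le_sum h1) hp.le
    _ = ((s.card : ℝ≥0∞) * T ^ (1/p)) ^ p := by rw [Finset.sum_const, nsmul_eq_mul]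
    _ = (s.card : ℝ≥0∞) ^ p * (T ^ (1/p)) ^ p := ENNReal.mul_rpow_of_nonneg _ _ hp.le
    _ = _ := by rw [enn_rpow_self_of' hp]

lemma enn_add_rpow_le (a b : ℝ≥0∞) {p : ℝ} (hp : 0 < p) :
    (a + b) ^ p ≤ (2:ℝ≥0∞) ^ p * (a ^ p + b ^ p) := by
  have ha : a ≤ (a ^ p + b ^ p) ^ (1/p) :=
    calc a = (a ^ p) ^ (1/p) := (enn_rpow_self_of hp _).symm
      _ ≤ _ := ENNReal.rpow_le_rpow le_self_add (by positivity)
  have hb : b ≤ (a ^ p + b ^ p) ^ (1/p) :=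
    calc b = (b ^ p) ^ (1/p) := (enn_rpow_self_of hp _).symm
      _ ≤ _ := ENNReal.rpow_le_rpow le_add_self (by positivity)
  calc (a + b) ^ p ≤ ((2:ℝ≥0∞) * (a ^ p + b ^ p) ^ (1/p)) ^ p := by
        refine ENNReal.rpow_le_rpow ?_ hp.le
        rw [two_mul]; exact add_le_add ha hb
    _ = (2:ℝ≥0∞) ^ p * ((a ^ p + b ^ p) ^ (1/p)) ^ p := ENNReal.mul_rpow_of_nonneg _ _ hp.le
    _ = _ := by rw [enn_rpow_self_of' hp]


set_option maxHeartbeats 1000000 in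
/-- Integrated pointwise estimate (2.7). -/
theorem integrated_pointwise_estimate (N : ℕ) (hN : 1 ≤ N) (p : ℝ) (hp : 1 < p)
    (l : ℝ) (hl : 0 < l) (hlni : ∀ n : ℤ, (n : ℝ) ≠ l) :
    ∃ C : ℝ, 0 < C ∧
      ∀ u : EuclideanSpace ℝ (Fin N) × ℝ → ℝ, Continuous u →
        Bornology.IsBounded (Set.range u) →
        semiP u l ⌈l⌉₊ < ⊤ →
        ∀ (x : EuclideanSpace ℝ (Fin N)) (t : ℝ), 0 ≤ t →
          ∀ ε : ℝ, 0 < ε →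
            ENNReal.ofReal (ε ^ ((N : ℝ) + 2) * |u (x, t)| ^ p) ≤
              ENNReal.ofReal
                (C * (semiP u l ⌈l⌉₊).toReal ^ p * ε ^ ((N : ℝ) + 2 + p * l)) +
              ENNReal.ofReal C *
                ∑ i ∈ Finset.Icc 1 ⌈l⌉₊,
                  ∫⁻ z in {z : EuclideanSpace ℝ (Fin N) × ℝ |
                      ‖z.1 - x‖ ≤ (i : ℝ) * ε ∧ t ≤ z.2 ∧ z.2 ≤ t + ((i : ℝ) * ε) ^ 2},
                    ENNReal.ofReal (|u z| ^ p) := by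
  classical
  have hp0 : (0:ℝ) < p := lt_trans one_pos hp
  set k := ⌈l⌉₊ with hkdef
  have hk1 : 1 ≤ k := Nat.one_le_ceil_iff.mpr hl
  set v : ℝ≥0∞ := volume (Metric.ball (0 : EuclideanSpace ℝ (Fin N)) 1) with hv
  have hv0 : v ≠ 0 := (Metric.measure_ball_pos _ _ one_pos).ne'
  have hvt : v ≠ ⊤ := measure_ball_lt_top.ne
  set K1 : ℝ≥0∞ := (2:ℝ≥0∞)^p * (k:ℝ≥0∞)^p * ((2^k : ℕ) : ℝ≥0∞)^p * v⁻¹ with hK1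
  have hK1t : K1 ≠ ⊤ := by
    have h2 : ∀ m : ℕ, ((m : ℝ≥0∞))^p ≠ ⊤ :=
      fun m => ENNReal.rpow_ne_top_of_nonneg hp0.le (by simp)
    exact ENNReal.mul_ne_top (ENNReal.mul_ne_top (ENNReal.mul_ne_top
      (ENNReal.rpow_ne_top_of_nonneg hp0.le (by norm_num)) (h2 k)) (h2 _))
      (ENNReal.inv_ne_top.mpr hv0)
  set C : ℝ := max ((2:ℝ)^p * 2^(p*l)) K1.toReal + 1 with hC
  have hCmax0 : (0:ℝ) ≤ max ((2:ℝ)^p * 2^(p*l)) K1.toReal :=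
    le_max_of_le_right ENNReal.toReal_nonneg
  have hCpos : 0 < C := by rw [hC]; linarith
  have hC1 : (2:ℝ)^p * 2^(p*l) ≤ C := by
    have := le_max_left ((2:ℝ)^p * 2^(p*l)) K1.toReal; rw [hC]; linarith
  have hC2 : K1 ≤ ENNReal.ofReal C := by
    calc K1 = ENNReal.ofReal K1.toReal := (ENNReal.ofReal_toReal hK1t).symm
      _ ≤ _ := ENNReal.ofReal_le_ofReal
        (by have := le_max_right ((2:ℝ)^p * 2^(p*l)) K1.toReal; rw [hC]; linarith)
  refine ⟨C, hCpos, ?_⟩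
  intro u hu _hb hfin x t ht ε hε
  set S := (semiP u l k).toReal with hSdef
  have hS0 : 0 ≤ S := ENNReal.toReal_nonneg
  set g : EuclideanSpace ℝ (Fin N) × ℝ → ℝ≥0∞ := fun z => ENNReal.ofReal (|u z| ^ p) with hg
  have hgm : Measurable g := by
    have hcont : Continuous fun z : EuclideanSpace ℝ (Fin N) × ℝ => |u z| ^ p :=
      (hu.abs).rpow_const (fun z => Or.inr hp0.le)
    exact (ENNReal.continuous_ofReal.comp hcont).measurable
  -- Step A : Hölder bound for the finite difference
  have hA : ∀ (h : EuclideanSpace ℝ (Fin N)) (τ : ℝ), ‖h‖ ≤ ε → 0 < τ → τ ≤ ε^2 →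
      |fdiffP u k h τ x t| ≤ S * (2*ε)^l := by
    intro h τ hh hτ0 hτε
    have hpn0 : 0 < pnormH h τ := by
      have h2 : 0 < |τ| ^ ((1:ℝ)/2) := Real.rpow_pos_of_pos (abs_pos.mpr hτ0.ne') _
      have h3 := norm_nonneg h
      unfold pnormH; linarith
    have hle : ENNReal.ofReal (|fdiffP u k h τ x t| / pnormH h τ ^ l) ≤ semiP u l k := by
      rw [semiP]
      exact le_iSup_of_le x <| le_iSup_of_le t <| le_iSup_of_le ht <| le_iSup_of_le h <|
        le_iSup_of_le τ <| le_iSup_of_le hτ0.le <|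
        le_iSup_of_le (fun hc => hτ0.ne' hc.2) le_rfl
    have hreal : |fdiffP u k h τ x t| / pnormH h τ ^ l ≤ S := by
      have h2 := ENNReal.toReal_mono hfin.ne hle
      rwa [ENNReal.toReal_ofReal
        (div_nonneg (abs_nonneg _) (Real.rpow_nonneg hpn0.le _))] at h2
    have h3 : |fdiffP u k h τ x t| ≤ S * pnormH h τ ^ l :=
      (div_le_iff₀ (Real.rpow_pos_of_pos hpn0 l)).mp hreal
    refine h3.trans (mul_le_mul_of_nonneg_left ?_ hS0)
    refine Real.rpow_le_rpow hpn0.le ?_ hl.le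
    have hτ2 : |τ| ^ ((1:ℝ)/2) ≤ ε := by
      rw [abs_of_pos hτ0]
      calc τ ^ ((1:ℝ)/2) ≤ (ε^2) ^ ((1:ℝ)/2) := Real.rpow_le_rpow hτ0.le hτε (by norm_num)
        _ = ε := by rw [← Real.rpow_natCast ε 2, ← Real.rpow_mul hε.le]; norm_num
    unfold pnormH; linarith
  -- Step B : decomposition of u(x,t)
  have hIcc : (Finset.range (k+1)).erase 0 = Finset.Icc 1 k := by
    ext i
    simp only [Finset.mem_erase, Finset.mem_range, Finset.mem_Icc, Nat.lt_succ_iff]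
    omega
  have hB : ∀ (h : EuclideanSpace ℝ (Fin N)) (τ : ℝ),
      |u (x, t)| ≤ |fdiffP u k h τ x t|
        + ∑ i ∈ Finset.Icc 1 k, (k.choose i : ℝ) * |u (x + (i:ℝ) • h, t + (i:ℝ) * τ)| := by
    intro h τ
    set f : ℕ → ℝ :=
      fun i => (-1:ℝ)^(k-i) * (k.choose i : ℝ) * u (x + (i:ℝ) • h, t + (i:ℝ)*τ) with hf
    have hsplit : fdiffP u k h τ x t = f 0 + ∑ i ∈ Finset.Icc 1 k, f i := by
      rw [show fdiffP u k h τ x t = ∑ i ∈ Finset.range (k+1), f i from rfl,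
        ← Finset.add_sum_erase _ f (Finset.mem_range.mpr (Nat.succ_pos k)), hIcc]
    have hf0 : |f 0| = |u (x, t)| := by
      simp [hf, abs_mul, abs_pow]
    calc |u (x,t)| = |f 0| := hf0.symm
      _ = |fdiffP u k h τ x t - ∑ i ∈ Finset.Icc 1 k, f i| := by rw [hsplit]; congr 1; ring
      _ ≤ |fdiffP u k h τ x t| + |∑ i ∈ Finset.Icc 1 k, f i| := by
          rw [sub_eq_add_neg]
          exact (abs_add_le _ _).trans (by rw [abs_neg])
      _ ≤ |fdiffP u k h τ x t| + ∑ i ∈ Finset.Icc 1 k, |f i| := by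
          exact add_le_add_right (Finset.abs_sum_le_sum_abs _ _) _
      _ = |fdiffP u k h τ x t| + ∑ i ∈ Finset.Icc 1 k,
            (k.choose i : ℝ) * |u (x + (i:ℝ) • h, t + (i:ℝ) * τ)| := by
          congr 1
          refine Finset.sum_congr rfl fun i _ => ?_
          simp [hf, abs_mul, abs_pow, Nat.abs_cast]
  -- region of integration
  set R : Set (EuclideanSpace ℝ (Fin N) × ℝ) :=
    (Metric.closedBall (0 : EuclideanSpace ℝ (Fin N)) ε) ×ˢ (Set.Ioc (0:ℝ) (ε^2)) with hRdef
  have hRm : MeasurableSet R := measurableSet_closedBall.prod measurableSet_Ioc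
  have hvolR : volume R = ENNReal.ofReal (ε^N * ε^2) * v := by
    rw [hRdef, hv, Measure.volume_eq_prod, Measure.prod_prod, Real.volume_Ioc,
      Measure.addHaar_closedBall _ _ hε.le, finrank_euclideanSpace_fin, sub_zero,
      ENNReal.ofReal_mul (by positivity)]
    ring
  set A : ℝ≥0∞ := ENNReal.ofReal (S * (2*ε)^l) with hAdef
  set c2 : ℝ≥0∞ := (2:ℝ≥0∞)^p * (k:ℝ≥0∞)^p with hc2
  -- pointwise bound on R
  have hptwise : ∀ z ∈ R, g (x, t) ≤ (2:ℝ≥0∞)^p * A^p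
      + c2 * ∑ i ∈ Finset.Icc 1 k,
          ((k.choose i : ℝ≥0∞))^p * g (x + (i:ℝ) • z.1, t + (i:ℝ) * z.2) := by
    intro z hz
    obtain ⟨hz1, hz2⟩ := hz
    rw [Metric.mem_closedBall, dist_zero_right] at hz1
    obtain ⟨hτ0, hτε⟩ := hz2
    have h1 : ENNReal.ofReal |u (x,t)| ≤ A + ∑ i ∈ Finset.Icc 1 k,
        (k.choose i : ℝ≥0∞) * ENNReal.ofReal |u (x + (i:ℝ) • z.1, t + (i:ℝ) * z.2)| := by
      have hreal : |u (x,t)| ≤ S*(2*ε)^l + ∑ i ∈ Finset.Icc 1 k,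
          (k.choose i : ℝ) * |u (x + (i:ℝ) • z.1, t + (i:ℝ) * z.2)| :=
        (hB z.1 z.2).trans (add_le_add_left (hA z.1 z.2 hz1 hτ0 hτε) _)
      calc ENNReal.ofReal |u (x,t)|
          ≤ ENNReal.ofReal (S*(2*ε)^l + ∑ i ∈ Finset.Icc 1 k,
              (k.choose i : ℝ) * |u (x + (i:ℝ) • z.1, t + (i:ℝ) * z.2)|) :=
            ENNReal.ofReal_le_ofReal hreal
        _ = A + ENNReal.ofReal (∑ i ∈ Finset.Icc 1 k,
              (k.choose i : ℝ) * |u (x + (i:ℝ) • z.1, t + (i:ℝ) * z.2)|) := by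
            rw [ENNReal.ofReal_add (by positivity)
              (Finset.sum_nonneg fun i _ => by positivity)]
        _ = A + ∑ i ∈ Finset.Icc 1 k,
              (k.choose i : ℝ≥0∞) * ENNReal.ofReal |u (x + (i:ℝ) • z.1, t + (i:ℝ) * z.2)| := by
            congr 1
            rw [ENNReal.ofReal_sum_of_nonneg (fun i _ => by positivity)]
            refine Finset.sum_congr rfl fun i _ => ?_
            rw [ENNReal.ofReal_mul (by positivity), ENNReal.ofReal_natCast]
    have hb2 : ∀ w : EuclideanSpace ℝ (Fin N) × ℝ,
        (ENNReal.ofReal |u w|)^p = g w := by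
      intro w
      have hgw : g w = ENNReal.ofReal (|u w| ^ p) := rfl
      rw [hgw]
      exact ENNReal.ofReal_rpow_of_nonneg (abs_nonneg _) hp0.le
    calc g (x,t) = (ENNReal.ofReal |u (x,t)|)^p := (hb2 _).symm
      _ ≤ (A + ∑ i ∈ Finset.Icc 1 k,
            (k.choose i : ℝ≥0∞) * ENNReal.ofReal |u (x + (i:ℝ) • z.1, t + (i:ℝ) * z.2)|)^p :=
          ENNReal.rpow_le_rpow h1 hp0.le
      _ ≤ (2:ℝ≥0∞)^p * (A^p + (∑ i ∈ Finset.Icc 1 k,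
            (k.choose i : ℝ≥0∞) * ENNReal.ofReal |u (x + (i:ℝ) • z.1, t + (i:ℝ) * z.2)|)^p) :=
          enn_add_rpow_le _ _ hp0
      _ ≤ (2:ℝ≥0∞)^p * (A^p + (k:ℝ≥0∞)^p * ∑ i ∈ Finset.Icc 1 k,
            ((k.choose i : ℝ≥0∞) * ENNReal.ofReal |u (x + (i:ℝ) • z.1, t + (i:ℝ) * z.2)|)^p) := by
          gcongr
          have h3 := enn_sum_rpow_le (Finset.Icc 1 k)
            (fun i => (k.choose i : ℝ≥0∞) *
              ENNReal.ofReal |u (x + (i:ℝ) • z.1, t + (i:ℝ) * z.2)|) hp0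
          simpa [Nat.card_Icc] using h3
      _ = (2:ℝ≥0∞)^p * A^p + c2 * ∑ i ∈ Finset.Icc 1 k,
            ((k.choose i : ℝ≥0∞))^p * g (x + (i:ℝ) • z.1, t + (i:ℝ) * z.2) := by
          have hsum : (∑ i ∈ Finset.Icc 1 k, ((k.choose i : ℝ≥0∞) *
              ENNReal.ofReal |u (x + (i:ℝ) • z.1, t + (i:ℝ) * z.2)|)^p)
              = ∑ i ∈ Finset.Icc 1 k,
                  ((k.choose i : ℝ≥0∞))^p * g (x + (i:ℝ) • z.1, t + (i:ℝ) * z.2) :=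
            Finset.sum_congr rfl fun i _ => by
              rw [ENNReal.mul_rpow_of_nonneg _ _ hp0.le, hb2]
          rw [hsum, mul_add, hc2, mul_assoc]
  -- measurability
  have hmi : ∀ i : ℕ, Measurable (fun z : EuclideanSpace ℝ (Fin N) × ℝ =>
      g (x + (i:ℝ) • z.1, t + (i:ℝ) * z.2)) := fun i =>
    hgm.comp ((measurable_const.add (measurable_fst.const_smul ((i:ℝ)))).prodMk
      (measurable_const.add (measurable_snd.const_mul _)))
  -- integrate the pointwise bound over R
  have hkey : volume R * g (x, t) ≤ volume R * ((2:ℝ≥0∞)^p * A^p)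
      + c2 * ∑ i ∈ Finset.Icc 1 k, ((k.choose i:ℝ≥0∞))^p *
          ∫⁻ z in R, g (x + (i:ℝ) • z.1, t + (i:ℝ) * z.2) := by
    have h0 : volume R * g (x,t) = ∫⁻ _z in R, g (x,t) ∂volume := by
      rw [setLIntegral_const, mul_comm]
    rw [h0]
    have hmeas : Measurable (fun z : EuclideanSpace ℝ (Fin N) × ℝ =>
        (2:ℝ≥0∞)^p * A^p + c2 * ∑ i ∈ Finset.Icc 1 k,
          ((k.choose i:ℝ≥0∞))^p * g (x + (i:ℝ) • z.1, t + (i:ℝ) * z.2)) :=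
      measurable_const.add ((Finset.measurable_sum _
        (fun i _ => (hmi i).const_mul _)).const_mul _)
    calc (∫⁻ _z in R, g (x,t) ∂volume)
        ≤ ∫⁻ z in R, ((2:ℝ≥0∞)^p * A^p + c2 * ∑ i ∈ Finset.Icc 1 k,
            ((k.choose i:ℝ≥0∞))^p * g (x + (i:ℝ) • z.1, t + (i:ℝ) * z.2)) ∂volume :=
          setLIntegral_mono hmeas hptwise
      _ = volume R * ((2:ℝ≥0∞)^p * A^p)
          + c2 * ∑ i ∈ Finset.Icc 1 k, ((k.choose i:ℝ≥0∞))^p *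
              ∫⁻ z in R, g (x + (i:ℝ) • z.1, t + (i:ℝ) * z.2) := by
          rw [lintegral_add_left measurable_const, setLIntegral_const, mul_comm (volume R)]
          congr 1
          rw [lintegral_const_mul _ (Finset.measurable_sum _ (fun i _ => (hmi i).const_mul _))]
          congr 1
          rw [lintegral_finset_sum _ (fun i _ => (hmi i).const_mul _)]
          refine Finset.sum_congr rfl fun i _ => ?_
          rw [lintegral_const_mul _ (hmi i)]
  -- change of variables per i
  have hD : ∀ i ∈ Finset.Icc 1 k,
      (∫⁻ z in R, g (x + (i:ℝ) • z.1, t + (i:ℝ) * z.2)) ≤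
        ∫⁻ z in {z : EuclideanSpace ℝ (Fin N) × ℝ |
          ‖z.1 - x‖ ≤ (i:ℝ)*ε ∧ t ≤ z.2 ∧ z.2 ≤ t + ((i:ℝ)*ε)^2}, g z := by
    intro i hi
    have hi1 : (1:ℝ) ≤ (i:ℝ) := by exact_mod_cast (Finset.mem_Icc.mp hi).1
    have hc0 : (0:ℝ) < (i:ℝ) := lt_of_lt_of_le one_pos hi1
    set c : ℝ := (i:ℝ) with hcdef
    set Q : Set (EuclideanSpace ℝ (Fin N) × ℝ) :=
      {z | ‖z.1 - x‖ ≤ c*ε ∧ t ≤ z.2 ∧ z.2 ≤ t + (c*ε)^2} with hQ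
    have hQm : MeasurableSet Q := by
      have hQeq : Q = {z : EuclideanSpace ℝ (Fin N) × ℝ | ‖z.1 - x‖ ≤ c*ε}
          ∩ ({z | t ≤ z.2} ∩ {z | z.2 ≤ t + (c*ε)^2}) := by
        ext z; simp [hQ, Set.mem_setOf_eq, and_assoc]
      rw [hQeq]
      exact (measurableSet_le ((continuous_fst.sub continuous_const).norm.measurable)
          measurable_const).inter
        ((measurableSet_le measurable_const measurable_snd).inter
          (measurableSet_le measurable_snd measurable_const))
    haveI : (volume : Measure (EuclideanSpace ℝ (Fin N) × ℝ)).IsAddHaarMeasure :=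
      Measure.prod.instIsAddHaarMeasure volume volume
    set a : EuclideanSpace ℝ (Fin N) × ℝ := (x, t) with ha
    have hφm : Measurable (fun z : EuclideanSpace ℝ (Fin N) × ℝ => a + c • z) :=
      (measurable_id.const_smul c).const_add a
    have hφeq : ∀ z : EuclideanSpace ℝ (Fin N) × ℝ,
        a + c • z = (x + c • z.1, t + c * z.2) := fun z => rfl
    have hsub : R ⊆ (fun z => a + c • z) ⁻¹' Q := by
      intro z hz
      obtain ⟨hh, hτ⟩ := hz
      rw [Metric.mem_closedBall, dist_zero_right] at hh
      obtain ⟨hτ0, hτε⟩ := hτ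
      show a + c • z ∈ Q
      rw [hφeq z]
      refine ⟨?_, ?_, ?_⟩
      · show ‖x + c • z.1 - x‖ ≤ c * ε
        rw [add_sub_cancel_left, norm_smul, Real.norm_eq_abs, abs_of_pos hc0]
        exact mul_le_mul_of_nonneg_left hh hc0.le
      · show t ≤ t + c * z.2
        nlinarith
      · show t + c * z.2 ≤ t + (c*ε)^2
        have h1 : c * z.2 ≤ c * ε^2 := mul_le_mul_of_nonneg_left hτε hc0.le
        have h2 : c * ε^2 ≤ (c*ε)^2 := by nlinarith
        linarith
    have hmm : Measurable (fun z : EuclideanSpace ℝ (Fin N) × ℝ => c • z) :=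
      measurable_id.const_smul c
    have hmap : Measure.map (fun z => a + c • z)
        (volume : Measure (EuclideanSpace ℝ (Fin N) × ℝ)) =
        ENNReal.ofReal |(c ^ Module.finrank ℝ (EuclideanSpace ℝ (Fin N) × ℝ))⁻¹| • volume := by
      have h1 : (fun z : EuclideanSpace ℝ (Fin N) × ℝ => a + c • z)
          = (fun z => a + z) ∘ (fun z => c • z) := rfl
      rw [h1, ← Measure.map_map (measurable_const_add a) hmm,
        Measure.map_addHaar_smul volume hc0.ne', Measure.map_smul, map_add_left_eq_self]
    calc (∫⁻ z in R, g (x + c • z.1, t + c * z.2))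
        = ∫⁻ z in R, g (a + c • z) := by
          refine lintegral_congr fun z => ?_
          rw [hφeq]
      _ ≤ ∫⁻ z in (fun z => a + c • z) ⁻¹' Q, g (a + c • z) := lintegral_mono_set hsub
      _ = ∫⁻ z in Q, g z ∂(Measure.map (fun z => a + c • z) volume) :=
          (setLIntegral_map hQm hgm hφm).symm
      _ = ENNReal.ofReal |(c ^ Module.finrank ℝ (EuclideanSpace ℝ (Fin N) × ℝ))⁻¹|
            * ∫⁻ z in Q, g z := by
          rw [hmap, Measure.restrict_smul, lintegral_smul_measure, smul_eq_mul]
      _ ≤ 1 * ∫⁻ z in Q, g z := by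
          gcongr
          rw [ENNReal.ofReal_le_one]
          have hpow : (1:ℝ) ≤ c ^ Module.finrank ℝ (EuclideanSpace ℝ (Fin N) × ℝ) :=
            one_le_pow₀ hi1
          rw [abs_of_nonneg (by positivity)]
          exact inv_le_one_of_one_le₀ hpow
      _ = ∫⁻ z in Q, g z := one_mul _
  -- combine
  have hkey2 : volume R * g (x, t) ≤ volume R * ((2:ℝ≥0∞)^p * A^p)
      + c2 * (((2^k : ℕ) : ℝ≥0∞)^p * ∑ i ∈ Finset.Icc 1 k,
          ∫⁻ z in {z : EuclideanSpace ℝ (Fin N) × ℝ |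
            ‖z.1 - x‖ ≤ (i:ℝ)*ε ∧ t ≤ z.2 ∧ z.2 ≤ t + ((i:ℝ)*ε)^2}, g z) := by
    refine hkey.trans ?_
    gcongr with i hi
    rw [Finset.mul_sum]
    refine Finset.sum_le_sum fun i hi => ?_
    refine mul_le_mul ?_ (hD i hi) zero_le zero_le
    refine ENNReal.rpow_le_rpow ?_ hp0.le
    have hch : (k.choose i) ≤ 2^k := by
      calc k.choose i ≤ ∑ j ∈ Finset.range (k+1), k.choose j := by
            rcases Finset.mem_Icc.mp hi with ⟨_, hik⟩
            exact Finset.single_le_sum (fun _ _ => Nat.zero_le _)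
              (Finset.mem_range.mpr (Nat.lt_succ_of_le hik))
        _ = 2^k := Nat.sum_range_choose k
    exact_mod_cast Nat.cast_le.mpr hch
  set W := ENNReal.ofReal (ε^N * ε^2) with hWdef
  have hWeq : ENNReal.ofReal (ε ^ ((N:ℝ)+2) * |u (x,t)|^p) = W * g (x,t) := by
    rw [hWdef, hg, ← ENNReal.ofReal_mul (by positivity)]
    congr 2
    rw [show ((N:ℝ)+2) = ((N+2 : ℕ) : ℝ) by push_cast; ring, Real.rpow_natCast, pow_add]
  have hcancel : v⁻¹ * (W * v) = W := by
    rw [mul_comm W v, ← mul_assoc, ENNReal.inv_mul_cancel hv0 hvt, one_mul]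
  have hmain : W * g (x,t) ≤ W * ((2:ℝ≥0∞)^p * A^p)
      + K1 * ∑ i ∈ Finset.Icc 1 k,
          ∫⁻ z in {z : EuclideanSpace ℝ (Fin N) × ℝ |
            ‖z.1 - x‖ ≤ (i:ℝ)*ε ∧ t ≤ z.2 ∧ z.2 ≤ t + ((i:ℝ)*ε)^2}, g z := by
    have h6 := mul_le_mul' (le_refl v⁻¹) hkey2
    rw [hvolR] at h6
    calc W * g (x,t) = v⁻¹ * (W * v * g (x,t)) := by
          rw [← mul_assoc, hcancel]
      _ ≤ v⁻¹ * (W * v * ((2:ℝ≥0∞)^p * A^p)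
          + c2 * (((2^k : ℕ) : ℝ≥0∞)^p * ∑ i ∈ Finset.Icc 1 k,
              ∫⁻ z in {z : EuclideanSpace ℝ (Fin N) × ℝ |
                ‖z.1 - x‖ ≤ (i:ℝ)*ε ∧ t ≤ z.2 ∧ z.2 ≤ t + ((i:ℝ)*ε)^2}, g z)) := h6
      _ = W * ((2:ℝ≥0∞)^p * A^p) + K1 * ∑ i ∈ Finset.Icc 1 k,
            ∫⁻ z in {z : EuclideanSpace ℝ (Fin N) × ℝ |
              ‖z.1 - x‖ ≤ (i:ℝ)*ε ∧ t ≤ z.2 ∧ z.2 ≤ t + ((i:ℝ)*ε)^2}, g z := by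
          rw [mul_add]
          congr 1
          · rw [← mul_assoc, mul_comm v⁻¹ (W*v), mul_assoc W v v⁻¹,
              ENNReal.mul_inv_cancel hv0 hvt, mul_one]
          · rw [hK1, hc2]; ring
  -- final bounds on both terms
  have hterm1 : W * ((2:ℝ≥0∞)^p * A^p) ≤
      ENNReal.ofReal (C * S ^ p * ε ^ ((N:ℝ) + 2 + p * l)) := by
    have h2p : ((2:ℝ≥0∞))^p = ENNReal.ofReal ((2:ℝ)^p) := by
      rw [← ENNReal.ofReal_ofNat 2]
      exact ENNReal.ofReal_rpow_of_nonneg (by norm_num) hp0.le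
    have hAp : A^p = ENNReal.ofReal ((S * (2*ε)^l)^p) := by
      rw [hAdef]
      exact ENNReal.ofReal_rpow_of_nonneg (by positivity) hp0.le
    rw [hWdef, h2p, hAp, ← ENNReal.ofReal_mul (by positivity),
      ← ENNReal.ofReal_mul (by positivity)]
    refine ENNReal.ofReal_le_ofReal ?_
    have he1 : ε ^ ((N:ℝ) + 2 + p * l) = (ε^N * ε^2) * ε ^ (p*l) := by
      rw [Real.rpow_add hε, show ((N:ℝ)+2) = ((N+2 : ℕ) : ℝ) by push_cast; ring,
        Real.rpow_natCast, pow_add]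
    have he2 : (S * (2*ε)^l)^p = S^p * (2:ℝ)^(p*l) * ε^(p*l) := by
      rw [Real.mul_rpow hS0 (Real.rpow_nonneg (by positivity) _),
        ← Real.rpow_mul (by positivity : (0:ℝ) ≤ 2*ε),
        Real.mul_rpow (by norm_num) hε.le, mul_comm l p]
      ring
    rw [he1, he2]
    have hnn : (0:ℝ) ≤ S^p * (ε^N*ε^2 * ε^(p*l)) :=
      mul_nonneg (Real.rpow_nonneg hS0 p) (by positivity)
    calc ε^N*ε^2 * ((2:ℝ)^p * (S^p * (2:ℝ)^(p*l) * ε^(p*l)))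
        = ((2:ℝ)^p * 2^(p*l)) * (S^p * (ε^N*ε^2 * ε^(p*l))) := by ring
      _ ≤ C * (S^p * (ε^N*ε^2 * ε^(p*l))) := mul_le_mul_of_nonneg_right hC1 hnn
      _ = C * S^p * (ε^N*ε^2 * ε^(p*l)) := by ring
  have hterm2 : K1 * (∑ i ∈ Finset.Icc 1 k,
        ∫⁻ z in {z : EuclideanSpace ℝ (Fin N) × ℝ |
          ‖z.1 - x‖ ≤ (i:ℝ)*ε ∧ t ≤ z.2 ∧ z.2 ≤ t + ((i:ℝ)*ε)^2}, g z)
      ≤ ENNReal.ofReal C * ∑ i ∈ Finset.Icc 1 k,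
          ∫⁻ z in {z : EuclideanSpace ℝ (Fin N) × ℝ |
            ‖z.1 - x‖ ≤ (i:ℝ)*ε ∧ t ≤ z.2 ∧ z.2 ≤ t + ((i:ℝ)*ε)^2}, g z :=
    mul_le_mul_left hC2 _
  calc ENNReal.ofReal (ε ^ ((N:ℝ)+2) * |u (x,t)|^p) = W * g (x,t) := hWeq
    _ ≤ W * ((2:ℝ≥0∞)^p * A^p) + K1 * ∑ i ∈ Finset.Icc 1 k,
          ∫⁻ z in {z : EuclideanSpace ℝ (Fin N) × ℝ |
            ‖z.1 - x‖ ≤ (i:ℝ)*ε ∧ t ≤ z.2 ∧ z.2 ≤ t + ((i:ℝ)*ε)^2}, g z := hmain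
    _ ≤ ENNReal.ofReal (C * S ^ p * ε ^ ((N:ℝ) + 2 + p * l))
        + ENNReal.ofReal C * ∑ i ∈ Finset.Icc 1 k,
            ∫⁻ z in {z : EuclideanSpace ℝ (Fin N) × ℝ |
              ‖z.1 - x‖ ≤ (i:ℝ)*ε ∧ t ≤ z.2 ∧ z.2 ≤ t + ((i:ℝ)*ε)^2}, g z :=
      add_le_add hterm1 hterm2
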